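/- For any n×n matrix M over a field K of characteristic zero, the space Δ(M) of polynomials whose finite difference along each row M_i is independent of x_i coincides with the space D(M) of polynomials whose directional derivative along each row M_i is independent of x_i. -/

import Mathlib

open MvPolynomial

section Aux

variable {K : Type*} [Field K] [CharZero K] {n : ℕ}

set_option linter.unusedSectionVars false

/-- Translation by `w`. -/
noncomputable def trOp (w : Fin n → K) :
    MvPolynomial (Fin n) K →ₐ[K] MvPolynomial (Fin n) K :=
  aeval (fun j => X j - C (w j))

/-- Directional derivative along `v`. -/
noncomputable def dirOp (v : Fin n → K) (p : MvPolynomial (Fin n) K) :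
    MvPolynomial (Fin n) K :=
  ∑ j, v j • pderiv j p

lemma trOp_comp (u w : Fin n → K) (p : MvPolynomial (Fin n) K) :
    trOp w (trOp u p) = trOp (fun j => u j + w j) p := by
  rw [← AlgHom.comp_apply]
  congr 1
  apply MvPolynomial.algHom_ext
  intro i
  simp [trOp, sub_sub, algebraMap_eq, add_comm]

lemma trOp_zero (p : MvPolynomial (Fin n) K) : trOp (0 : Fin n → K) p = p := by
  simp [trOp]

lemma pderiv_trOp (w : Fin n → K) (i : Fin n) (p : MvPolynomial (Fin n) K) :
    pderiv i (trOp w p) = trOp w (pderiv i p) := by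
  classical
  induction p using MvPolynomial.induction_on with
  | C a => simp [trOp, algebraMap_eq]
  | add p q hp hq => simp [hp, hq]
  | mul_X p j hp =>
      have hX : trOp w (X j) = X j - C (w j) := by simp [trOp]
      rw [map_mul, pderiv_mul, pderiv_mul, map_add, map_mul, map_mul, hp, hX]
      congr 2
      rcases eq_or_ne j i with rfl | h
      · simp [trOp]
      · simp [trOp, h]

lemma pderiv_pderiv_comm (i j : Fin n) (p : MvPolynomial (Fin n) K) :
    pderiv i (pderiv j p) = pderiv j (pderiv i p) := by
  classical
  induction p using MvPolynomial.induction_on' with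
  | add p q hp hq => simp [hp, hq]
  | monomial s a =>
      rcases eq_or_ne i j with rfl | hij
      · rfl
      · simp only [pderiv_monomial, Finsupp.tsub_apply, tsub_tsub,
          Finsupp.single_eq_of_ne hij.symm, Finsupp.single_eq_of_ne hij, tsub_zero]
        rw [add_comm (Finsupp.single j 1)]
        congr 1
        ring

lemma dirOp_C (v : Fin n → K) (a : K) : dirOp v (C a : MvPolynomial (Fin n) K) = 0 := by
  simp [dirOp]

lemma dirOp_X (v : Fin n → K) (i : Fin n) :
    dirOp v (X i : MvPolynomial (Fin n) K) = C (v i) := by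
  classical
  rw [dirOp, Finset.sum_eq_single i]
  · simp [smul_eq_C_mul]
  · intro j _ hj
    simp [pderiv_X_of_ne hj.symm]
  · simp

lemma dirOp_mul (v : Fin n → K) (p q : MvPolynomial (Fin n) K) :
    dirOp v (p * q) = dirOp v p * q + p * dirOp v q := by
  simp only [dirOp, pderiv_mul, smul_add, Finset.sum_add_distrib, Finset.sum_mul,
    Finset.mul_sum, smul_mul_assoc, mul_smul_comm]

lemma pderiv_dirOp (v : Fin n → K) (i : Fin n) (p : MvPolynomial (Fin n) K) :
    pderiv i (dirOp v p) = dirOp v (pderiv i p) := by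
  simp only [dirOp, map_sum, map_smul]
  exact Finset.sum_congr rfl fun j _ => by rw [(pderiv i).map_smul, pderiv_pderiv_comm]

end Aux

section Phi

variable {K : Type*} [Field K] [CharZero K] {n : ℕ}

set_option linter.unusedSectionVars false

noncomputable def phiOp (v : Fin n → K) :
    MvPolynomial (Fin n) K →ₐ[K] Polynomial (MvPolynomial (Fin n) K) :=
  aeval (fun j => Polynomial.C (X j) - Polynomial.C (C (v j)) * Polynomial.X)

lemma phiOp_eval (v : Fin n → K) (c : K) (p : MvPolynomial (Fin n) K) :
    Polynomial.eval (C c) (phiOp v p) = trOp (fun j => c * v j) p := by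
  induction p using MvPolynomial.induction_on with
  | C a => simp [phiOp, trOp, algebraMap_eq]
  | add p q hp hq => simp [hp, hq]
  | mul_X p j hp =>
      rw [map_mul, Polynomial.eval_mul, hp, map_mul]
      congr 1
      simp only [phiOp, trOp, aeval_X, Polynomial.eval_sub, Polynomial.eval_C,
        Polynomial.eval_mul, Polynomial.eval_X, ← C_mul]
      rw [mul_comm]

lemma phiOp_eval_zero (v : Fin n → K) (p : MvPolynomial (Fin n) K) :
    Polynomial.eval (C 0) (phiOp v p) = p := by
  have h0 : (fun j => (0 : K) * v j) = (0 : Fin n → K) := by funext j; simp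
  rw [phiOp_eval, h0, trOp_zero]

lemma phiOp_derivative (v : Fin n → K) (p : MvPolynomial (Fin n) K) :
    Polynomial.derivative (phiOp v p) = - phiOp v (dirOp v p) := by
  induction p using MvPolynomial.induction_on with
  | C a => simp [phiOp, dirOp_C, algebraMap_eq]
  | add p q hp hq =>
      have hD : dirOp v (p + q) = dirOp v p + dirOp v q := by
        simp [dirOp, Finset.sum_add_distrib, smul_add]
      simp only [map_add, Polynomial.derivative_add, hp, hq, hD, neg_add]
  | mul_X p j hp =>
      rw [map_mul, Polynomial.derivative_mul, hp, dirOp_mul, dirOp_X, map_add,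
        map_mul, map_mul]
      have hXj : phiOp v (X j) = Polynomial.C (X j) - Polynomial.C (C (v j)) * Polynomial.X := by
        simp [phiOp]
      have hCv : phiOp v (C (v j)) = Polynomial.C (C (v j)) := by
        simp [phiOp, algebraMap_eq]
      rw [hXj, hCv]
      have : Polynomial.derivative
          (Polynomial.C (X j : MvPolynomial (Fin n) K)
            - Polynomial.C (C (v j)) * Polynomial.X) = - Polynomial.C (C (v j)) := by
        simp
      rw [this]
      ring

lemma trOp_eq_self_iff (v : Fin n → K) (p : MvPolynomial (Fin n) K) :
    trOp v p = p ↔ dirOp v p = 0 := by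
  constructor
  · intro h
    have hk : ∀ k : ℕ, trOp (fun j => (k : K) * v j) p = p := by
      intro k
      induction k with
      | zero =>
          have h0 : (fun j => ((0 : ℕ) : K) * v j) = (0 : Fin n → K) := by
            funext j; push_cast; simp
          rw [h0, trOp_zero]
      | succ k ih =>
          have hc := trOp_comp (fun j => (k : K) * v j) v p
          rw [ih, h] at hc
          have harg : (fun j => (k : K) * v j + v j)
              = (fun j => ((k + 1 : ℕ) : K) * v j) := by
            funext j; push_cast; ring
          rw [harg] at hc
          exact hc.symm
    have hphi : phiOp v p = Polynomial.C p := by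
      have hzero : phiOp v p - Polynomial.C p = 0 := by
        apply Polynomial.eq_zero_of_infinite_isRoot
        apply Set.infinite_of_injective_forall_mem
          (f := fun k : ℕ => (C ((k : K)) : MvPolynomial (Fin n) K))
        · intro a b hab
          exact Nat.cast_injective (C_injective _ _ hab)
        · intro k
          simp only [Set.mem_setOf_eq, Polynomial.IsRoot, Polynomial.eval_sub,
            Polynomial.eval_C, phiOp_eval, hk k, sub_self]
      exact sub_eq_zero.mp hzero
    have hd : phiOp v (dirOp v p) = 0 := by
      have := phiOp_derivative v p
      rw [hphi, Polynomial.derivative_C] at this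
      have := this.symm
      rwa [neg_eq_zero] at this
    have := phiOp_eval_zero v (dirOp v p)
    rw [hd] at this
    simpa using this.symm
  · intro h
    have hd : Polynomial.derivative (phiOp v p) = 0 := by
      rw [phiOp_derivative, h, map_zero, neg_zero]
    have hC := Polynomial.eq_C_of_derivative_eq_zero hd
    have h0 := phiOp_eval_zero v p
    have h1 := phiOp_eval v 1 p
    rw [hC] at h0 h1
    simp only [Polynomial.eval_C] at h0 h1
    have harg : (fun j => (1 : K) * v j) = v := by funext j; ring
    rw [harg] at h1
    rw [← h1, h0]

end Phi

/-- The space `Δ(M)` of polynomials whose finite difference along each row `M_i` is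
independent of `x_i` coincides with the space `D(M)` of polynomials whose directional
derivative along each row `M_i` is independent of `x_i`. -/
theorem deltaSpace_eq_derivSpace
    {K : Type*} [Field K] [CharZero K] {n : ℕ}
    (M : Matrix (Fin n) (Fin n) K) :
    {p : MvPolynomial (Fin n) K |
        ∀ i, pderiv i (aeval (fun j => X j - C (M i j)) p - p) = 0} =
    {p : MvPolynomial (Fin n) K |
        ∀ i, pderiv i (∑ j, M i j • pderiv j p) = 0} := by
  ext p
  simp only [Set.mem_setOf_eq]
  have key : ∀ i : Fin n,
      (pderiv i ((aeval (fun j => X j - C (M i j))) p - p) = 0 ↔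
        pderiv i (∑ j, M i j • pderiv j p) = 0) := by
    intro i
    have e1 : (aeval (fun j => X j - C (M i j))) p = trOp (M i) p := rfl
    have e2 : (∑ j, M i j • pderiv j p) = dirOp (M i) p := rfl
    rw [e1, e2, map_sub, pderiv_trOp, sub_eq_zero, trOp_eq_self_iff, pderiv_dirOp]
  exact forall_congr' key
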